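/- Let p ≥ 1 and n ≥ 1 be natural numbers, and let S ⊆ (Fin n → ℕ) be a finite staircase (downward-closed set) of cardinality m all of whose elements have every coordinate strictly less than p. Then for each coordinate i ∈ Fin n, the sum Σ_{u ∈ S} u i is at most (p(p−1)/2)·⌊m/p⌋ + choose(m mod p, 2). -/
import Mathlib

lemma cs' (n : ℕ) : (n + 1).choose 2 = n.choose 2 + n := by
  rw [Nat.choose_succ_succ, Nat.choose_one_right, Nat.add_comm]

lemma choose_two_add' (a b : ℕ) : (a + b).choose 2 = a.choose 2 + b.choose 2 + a * b := by
  induction b with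
  | zero => simp
  | succ b ih =>
    have : a + (b + 1) = a + b + 1 := by omega
    rw [this, cs' (a + b), ih, cs' b]; ring

lemma fstep' (p : ℕ) (hp : 0 < p) (a k : ℕ) (hk : k ≤ p) :
    p.choose 2 * (a / p) + (a % p).choose 2 + k.choose 2 ≤
      p.choose 2 * ((a + k) / p) + ((a + k) % p).choose 2 := by
  set r := a % p with hr
  set q := a / p with hq
  have hm : a = p * q + r := by rw [hq, hr]; exact (Nat.div_add_mod a p).symm
  have hrp : r < p := Nat.mod_lt _ hp
  by_cases h : r + k < p
  · have h1 : (a + k) / p = q := by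
      rw [hm, add_assoc, Nat.mul_add_div hp, Nat.div_eq_of_lt h, add_zero]
    have h2 : (a + k) % p = r + k := by
      rw [hm, add_assoc, Nat.mul_add_mod, Nat.mod_eq_of_lt h]
    rw [h1, h2, choose_two_add' r k]
    have : 0 ≤ r * k := Nat.zero_le _
    linarith
  · push_neg at h
    set s := r + k - p with hs
    have hsp : s < p := by omega
    have h1 : (a + k) / p = q + 1 := by
      have : a + k = p * q + (p + s) := by omega
      rw [this, ← add_assoc, show p * q + p = p * (q + 1) by ring, Nat.mul_add_div hp,
        Nat.div_eq_of_lt hsp, add_zero]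
    have h2 : (a + k) % p = s := by
      have : a + k = p * q + (p + s) := by omega
      rw [this, ← add_assoc, show p * q + p = p * (q + 1) by ring, Nat.mul_add_mod,
        Nat.mod_eq_of_lt hsp]
    rw [h1, h2]
    set d := p - k with hd
    have hd1 : p = k + d := by omega
    have hd2 : r = s + d := by omega
    have hsk : s ≤ k := by omega
    have key : r.choose 2 + k.choose 2 ≤ p.choose 2 + s.choose 2 := by
      rw [hd1, hd2, choose_two_add' s d, choose_two_add' k d]
      have : s * d ≤ k * d := Nat.mul_le_mul_right _ hsk
      linarith
    have hexp : p.choose 2 * (q + 1) = p.choose 2 * q + p.choose 2 := by ring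
    rw [hexp]
    linarith

lemma sum_choose_le' {α : Type*} [DecidableEq α] (p : ℕ) (hp : 0 < p) (W : Finset α)
    (g : α → ℕ) (hg : ∀ w ∈ W, g w ≤ p) :
    ∑ w ∈ W, (g w).choose 2 ≤
      p.choose 2 * ((∑ w ∈ W, g w) / p) + ((∑ w ∈ W, g w) % p).choose 2 := by
  induction W using Finset.induction_on with
  | empty => simp
  | @insert a W ha ih =>
    rw [Finset.sum_insert ha, Finset.sum_insert ha]
    have hga : g a ≤ p := hg a (Finset.mem_insert_self a W)
    have ih' := ih (fun w hw => hg w (Finset.mem_insert_of_mem hw))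
    have hstep := fstep' p hp (∑ w ∈ W, g w) (g a) hga
    have hcomm : g a + ∑ w ∈ W, g w = (∑ w ∈ W, g w) + g a := by omega
    rw [hcomm]
    linarith

lemma dc_eq_range' (T : Finset ℕ) (h : ∀ t ∈ T, ∀ s ≤ t, s ∈ T) :
    T = Finset.range T.card := by
  have hsub : T ⊆ Finset.range T.card := by
    intro t ht
    rw [Finset.mem_range]
    by_contra hlt
    push_neg at hlt
    have hss : Finset.range (t + 1) ⊆ T := by
      intro s hs
      exact h t ht s (Nat.lt_succ_iff.mp (Finset.mem_range.mp hs))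
    have := Finset.card_le_card hss
    rw [Finset.card_range] at this
    omega
  exact Finset.eq_of_subset_of_card_le hsub (by rw [Finset.card_range])

lemma sum_range_id_choose (k : ℕ) : ∑ t ∈ Finset.range k, t = k.choose 2 := by
  have h1 := Finset.sum_range_id_mul_two k
  have h2 : k.choose 2 = k * (k - 1) / 2 := Nat.choose_two_right k
  omega

/-- If `S` is a finite staircase (downward-closed set) in `(Fin n → ℕ)` with `m` elements,
all of whose elements have every coordinate `< p`, then for each coordinate `i` the sum of
the `i`-th coordinates over `S` is at most `(p(p-1)/2)·⌊m/p⌋ + choose (m % p) 2`. -/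
theorem staircase_coordinate_sum_le (p n : ℕ) (hp : 1 ≤ p) (hn : 1 ≤ n)
    (S : Finset (Fin n → ℕ)) (m : ℕ) (hm : S.card = m)
    (hstair : ∀ u ∈ S, ∀ v : Fin n → ℕ, (∀ i, v i ≤ u i) → v ∈ S)
    (hbound : ∀ u ∈ S, ∀ i, u i < p) (i : Fin n) :
    ∑ u ∈ S, u i ≤ p * (p - 1) / 2 * (m / p) + Nat.choose (m % p) 2 := by
  subst hm
  classical
  set π : (Fin n → ℕ) → (Fin n → ℕ) := fun u => Function.update u i 0 with hπ
  set W := S.image π with hW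
  have hmaps : ∀ u ∈ S, π u ∈ W := fun u hu => Finset.mem_image_of_mem _ hu
  have hsum : ∑ u ∈ S, u i = ∑ w ∈ W, ∑ u ∈ S.filter (fun u => π u = w), u i :=
    (Finset.sum_fiberwise_of_maps_to hmaps _).symm
  have hcard : S.card = ∑ w ∈ W, (S.filter (fun u => π u = w)).card :=
    Finset.card_eq_sum_card_fiberwise hmaps
  -- per-fiber analysis
  have key : ∀ w ∈ W, (∑ u ∈ S.filter (fun u => π u = w), u i) =
      ((S.filter (fun u => π u = w)).card).choose 2 ∧
      (S.filter (fun u => π u = w)).card ≤ p := by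
    intro w hw
    set F := S.filter (fun u => π u = w) with hF
    have hinj : ∀ u ∈ F, ∀ v ∈ F, u i = v i → u = v := by
      intro u hu v hv heq
      have hu' := Finset.mem_filter.mp hu
      have hv' := Finset.mem_filter.mp hv
      funext j
      by_cases hj : j = i
      · subst hj; exact heq
      · have h := congrFun (hu'.2.trans hv'.2.symm) j
        simpa [hπ, Function.update_of_ne hj] using h
    set T := F.image (fun u => u i) with hT
    have hsumT : ∑ t ∈ T, t = ∑ u ∈ F, u i := Finset.sum_image hinj
    have hcardT : T.card = F.card := Finset.card_image_of_injOn (fun u hu v hv => hinj u hu v hv)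
    have hdc : ∀ t ∈ T, ∀ s ≤ t, s ∈ T := by
      intro t ht s hs
      obtain ⟨u, hu, hui⟩ := Finset.mem_image.mp ht
      have hu' := Finset.mem_filter.mp hu
      set v := Function.update u i s with hv
      have hvS : v ∈ S := by
        apply hstair u hu'.1 v
        intro j
        by_cases hj : j = i
        · subst hj
          rw [hv, Function.update_self]
          exact hs.trans hui.ge
        · rw [hv, Function.update_of_ne hj]
      have hπv : π v = w := by
        rw [hπ]
        simp only [hv]
        rw [Function.update_idem]
        exact hu'.2
      have hvF : v ∈ F := Finset.mem_filter.mpr ⟨hvS, hπv⟩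
      exact Finset.mem_image.mpr ⟨v, hvF, by rw [hv, Function.update_self]⟩
    have hTr : T = Finset.range T.card := dc_eq_range' T hdc
    have hTp : T.card ≤ p := by
      have : T ⊆ Finset.range p := by
        intro t ht
        obtain ⟨u, hu, hui⟩ := Finset.mem_image.mp ht
        rw [Finset.mem_range, ← hui]
        exact hbound u (Finset.mem_filter.mp hu).1 i
      have := Finset.card_le_card this
      rwa [Finset.card_range] at this
    constructor
    · rw [← hsumT, hTr, sum_range_id_choose, hcardT]
    · rw [← hcardT]; exact hTp
  have hfin : ∑ u ∈ S, u i = ∑ w ∈ W, ((S.filter (fun u => π u = w)).card).choose 2 := by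
    rw [hsum]
    exact Finset.sum_congr rfl (fun w hw => (key w hw).1)
  have hle := sum_choose_le' p hp W (fun w => (S.filter (fun u => π u = w)).card)
    (fun w hw => (key w hw).2)
  rw [← hcard] at hle
  rw [hfin, show p * (p - 1) / 2 = p.choose 2 from (Nat.choose_two_right p).symm]
  exact hle
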